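/- arXiv:2510.01515 — 5 statements merged into one kernel-verified Lean document; each statement's English description precedes it below -/
import Mathlib

section
/- Let f : ℝ^m → [0, ∞) be convex, positively 1-homogeneous, and satisfy c|ξ| ≤ f(ξ) ≤ C|ξ| for all ξ with constants 0 < c ≤ C. Define the polar f⋆(ξ*) := sup{⟨ξ*, ξ⟩ : f(ξ) ≤ 1}. Then for every t > 0, sup{ f⋆(ξ₁* + ξ₂*) + t f⋆(ξ₁* − ξ₂*) : f⋆(ξ₁*) ≤ 1, f⋆(ξ₂*) ≤ 1 } = sup{ f(ξ₁ + tξ₂) + f(ξ₁ − tξ₂) : f(ξ₁) ≤ 1, f(ξ₂) ≤ 1 }. -/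
open RealInnerProductSpace

/-- Duality between the modulus of smoothness of a gauge `f` comparable to the Euclidean norm and
the modulus of convexity of its polar `f⋆`: for every `t > 0`,
`sup{f⋆(ξ₁*+ξ₂*) + t f⋆(ξ₁*−ξ₂*) : f⋆(ξᵢ*) ≤ 1} = sup{f(ξ₁+tξ₂) + f(ξ₁−tξ₂) : f(ξᵢ) ≤ 1}`. -/
theorem polar_smoothness_convexity_duality {m : ℕ} (f : EuclideanSpace ℝ (Fin m) → ℝ)
    (c C : ℝ) (hc : 0 < c) (hcC : c ≤ C)
    (hconv : ConvexOn ℝ Set.univ f)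
    (hhom : ∀ s : ℝ, 0 < s → ∀ ξ, f (s • ξ) = s * f ξ)
    (hbd : ∀ ξ, c * ‖ξ‖ ≤ f ξ ∧ f ξ ≤ C * ‖ξ‖)
    (fstar : EuclideanSpace ℝ (Fin m) → ℝ)
    (hfstar : ∀ w, fstar w = sSup ((fun x => ⟪w, x⟫) '' {x | f x ≤ 1}))
    (t : ℝ) (ht : 0 < t) :
    sSup {r : ℝ | ∃ a b, fstar a ≤ 1 ∧ fstar b ≤ 1 ∧ r = fstar (a + b) + t * fstar (a - b)} =
    sSup {r : ℝ | ∃ x y, f x ≤ 1 ∧ f y ≤ 1 ∧ r = f (x + t • y) + f (x - t • y)} := by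
  have hC : 0 < C := hc.trans_le hcC
  have hf0 : f 0 = 0 := le_antisymm (by simpa using (hbd 0).2) (by simpa using (hbd 0).1)
  have hfnn : ∀ ξ, 0 ≤ f ξ := fun ξ => le_trans (by positivity) (hbd ξ).1
  set K : Set (EuclideanSpace ℝ (Fin m)) := {x | f x ≤ 1} with hKdef
  have hK0 : (0 : EuclideanSpace ℝ (Fin m)) ∈ K := by simp [hKdef, hf0]
  have hKne : K.Nonempty := ⟨0, hK0⟩
  have hKbd : ∀ x ∈ K, ‖x‖ ≤ c⁻¹ := by
    intro x hx
    have h1 : c * ‖x‖ ≤ 1 := (hbd x).1.trans hx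
    rw [← one_div, le_div_iff₀ hc]
    linarith
  have hImbdd : ∀ a, BddAbove ((fun x => ⟪a, x⟫) '' K) := by
    intro a
    refine ⟨‖a‖ * c⁻¹, ?_⟩
    rintro _ ⟨x, hx, rfl⟩
    calc ⟪a, x⟫ ≤ ‖a‖ * ‖x‖ := real_inner_le_norm a x
      _ ≤ ‖a‖ * c⁻¹ := by
          have := hKbd x hx
          gcongr
  have hstar_ge : ∀ a x, f x ≤ 1 → ⟪a, x⟫ ≤ fstar a := by
    intro a x hx
    rw [hfstar a]
    exact le_csSup (hImbdd a) ⟨x, hx, rfl⟩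
  have hstar_nonneg : ∀ a, 0 ≤ fstar a := by
    intro a
    have := hstar_ge a 0 (by simp [hf0])
    simpa using this
  have hstar_le_norm : ∀ w, fstar w ≤ ‖w‖ * c⁻¹ := by
    intro w
    rw [hfstar w]
    refine Real.sSup_le ?_ (by positivity)
    rintro _ ⟨x, hx, rfl⟩
    calc ⟪w, x⟫ ≤ ‖w‖ * ‖x‖ := real_inner_le_norm w x
      _ ≤ ‖w‖ * c⁻¹ := by
          have := hKbd x hx
          gcongr
  have hnorm_of_star : ∀ b, fstar b ≤ 1 → ‖b‖ ≤ C := by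
    intro b hb
    rcases eq_or_ne b 0 with rfl | hbne
    · simp [hC.le]
    · have hnb : 0 < ‖b‖ := norm_pos_iff.2 hbne
      set x : EuclideanSpace ℝ (Fin m) := (C * ‖b‖)⁻¹ • b with hxdef
      have hxnorm : ‖x‖ = C⁻¹ := by
        rw [hxdef, norm_smul, Real.norm_eq_abs, abs_of_pos (by positivity)]
        field_simp
      have hxK : f x ≤ 1 := by
        calc f x ≤ C * ‖x‖ := (hbd x).2
          _ = 1 := by rw [hxnorm]; field_simp
      have h1 : ⟪b, x⟫ ≤ 1 := (hstar_ge b x hxK).trans hb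
      rw [hxdef, real_inner_smul_right, real_inner_self_eq_norm_mul_norm] at h1
      have h2 : (C * ‖b‖)⁻¹ * (‖b‖ * ‖b‖) = ‖b‖ / C := by field_simp
      rw [h2, div_le_one hC] at h1
      exact h1
  -- easy polar inequality
  have hpolar_le : ∀ a z, fstar a ≤ 1 → ⟪a, z⟫ ≤ f z := by
    intro a z ha
    rcases eq_or_ne z 0 with rfl | hz
    · simp [hf0]
    · have hfz : 0 < f z := lt_of_lt_of_le (mul_pos hc (norm_pos_iff.2 hz)) (hbd z).1
      have hx1 : f ((f z)⁻¹ • z) = 1 := by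
        rw [hhom _ (inv_pos.2 hfz)]; field_simp
      have h := (hstar_ge a _ hx1.le).trans ha
      rw [real_inner_smul_right] at h
      calc ⟪a, z⟫ = f z * ((f z)⁻¹ * ⟪a, z⟫) := by field_simp
        _ ≤ f z * 1 := by gcongr
        _ = f z := mul_one _
  -- convexity of K
  have hKconv : Convex ℝ K := by
    have := hconv.convex_le 1
    simpa [hKdef, Set.sep_univ] using this
  have h0int : (0 : EuclideanSpace ℝ (Fin m)) ∈ interior K := by
    rw [mem_interior_iff_mem_nhds]
    refine Filter.mem_of_superset (Metric.ball_mem_nhds 0 (by positivity : (0:ℝ) < C⁻¹)) ?_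
    intro x hx
    simp only [Metric.mem_ball, dist_zero_right] at hx
    simp only [hKdef, Set.mem_setOf_eq]
    calc f x ≤ C * ‖x‖ := (hbd x).2
      _ ≤ C * C⁻¹ := by gcongr
      _ = 1 := by field_simp
  -- bipolar: support functional
  have bipolar : ∀ z, ∃ a, fstar a ≤ 1 ∧ ⟪a, z⟫ = f z := by
    intro z
    rcases eq_or_ne z 0 with rfl | hz
    · refine ⟨0, ?_, by simp [hf0]⟩
      rw [hfstar 0]
      refine Real.sSup_le ?_ zero_le_one
      rintro _ ⟨x, hx, rfl⟩; simp
    · have hfz : 0 < f z := lt_of_lt_of_le (mul_pos hc (norm_pos_iff.2 hz)) (hbd z).1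
      set z' : EuclideanSpace ℝ (Fin m) := (f z)⁻¹ • z with hz'def
      have hfz' : f z' = 1 := by
        rw [hz'def, hhom _ (inv_pos.2 hfz)]; field_simp
      have hz'ne : z' ≠ 0 := fun h => by simp [h, hf0] at hfz'
      have hz'notint : z' ∉ interior K := by
        intro h
        obtain ⟨ε, hε, hball⟩ := Metric.isOpen_iff.1 isOpen_interior z' h
        have hnz : 0 < ‖z'‖ := norm_pos_iff.2 hz'ne
        set s : ℝ := 1 + ε / (2 * ‖z'‖) with hsdef
        have hs1 : 1 < s := by
          have : 0 < ε / (2 * ‖z'‖) := by positivity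
          rw [hsdef]; linarith
        have hmem : s • z' ∈ K := by
          apply interior_subset; apply hball
          rw [Metric.mem_ball, dist_eq_norm]
          have h1 : s • z' - z' = (s - 1) • z' := by rw [sub_smul, one_smul]
          rw [h1, norm_smul, Real.norm_eq_abs, abs_of_pos (by linarith)]
          rw [hsdef]
          have h2 : (1 + ε / (2 * ‖z'‖) - 1) * ‖z'‖ = ε / 2 := by
            field_simp
            ring
          rw [h2]; linarith
        have hfs : f (s • z') = s := by rw [hhom _ (by linarith), hfz', mul_one]
        have : s ≤ 1 := by rw [← hfs]; exact hmem
        linarith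
      obtain ⟨ℓ, hℓ⟩ := geometric_hahn_banach_open_point hKconv.interior isOpen_interior hz'notint
      have hℓz' : 0 < ℓ z' := by
        have := hℓ 0 h0int
        simpa using this
      have hℓK : ∀ x ∈ K, ℓ x ≤ ℓ z' := by
        intro x hx
        by_contra hlt
        push_neg at hlt
        have hℓx : 0 < ℓ x := hℓz'.trans hlt
        set b : ℝ := ℓ z' / ℓ x with hbdef
        have hb0 : 0 < b := by positivity
        have hb1 : b < 1 := (div_lt_one hℓx).2 hlt
        have hmem : (1 - b) • (0 : EuclideanSpace ℝ (Fin m)) + b • x ∈ interior K :=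
          hKconv.combo_interior_self_mem_interior h0int hx (by linarith) hb0.le (by ring)
        have h3 := hℓ _ hmem
        rw [smul_zero, zero_add, map_smul] at h3
        have hbx : b • ℓ x = ℓ z' := by
          rw [hbdef, smul_eq_mul, div_mul_cancel₀ _ hℓx.ne']
        rw [hbx] at h3
        exact lt_irrefl _ h3
      set a : EuclideanSpace ℝ (Fin m) :=
        (ℓ z')⁻¹ • (InnerProductSpace.toDual ℝ (EuclideanSpace ℝ (Fin m))).symm ℓ with hadef
      have hainner : ∀ x, ⟪a, x⟫ = (ℓ z')⁻¹ * ℓ x := by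
        intro x
        rw [hadef, real_inner_smul_left, InnerProductSpace.toDual_symm_apply]
      have hastar : fstar a ≤ 1 := by
        rw [hfstar a]
        refine Real.sSup_le ?_ zero_le_one
        rintro _ ⟨x, hx, rfl⟩
        show ⟪a, x⟫ ≤ 1
        rw [hainner x]
        calc (ℓ z')⁻¹ * ℓ x ≤ (ℓ z')⁻¹ * ℓ z' := by
              have := hℓK x hx; gcongr
          _ = 1 := inv_mul_cancel₀ hℓz'.ne'
      refine ⟨a, hastar, ?_⟩
      have hzz : z = f z • z' := by
        rw [hz'def, smul_smul]
        rw [mul_inv_cancel₀ hfz.ne', one_smul]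
      rw [hzz, real_inner_smul_right, hainner, inv_mul_cancel₀ hℓz'.ne', mul_one,
        hhom _ hfz, hfz', mul_one]
  -- the two sets
  set S₁ := {r : ℝ | ∃ a b, fstar a ≤ 1 ∧ fstar b ≤ 1 ∧ r = fstar (a + b) + t * fstar (a - b)}
    with hS₁def
  set S₂ := {r : ℝ | ∃ x y, f x ≤ 1 ∧ f y ≤ 1 ∧ r = f (x + t • y) + f (x - t • y)} with hS₂def
  have hS₂bdd : BddAbove S₂ := by
    refine ⟨2 * (C * ((1 + t) * c⁻¹)), ?_⟩
    rintro _ ⟨x, y, hx, hy, rfl⟩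
    have hxn := hKbd x hx
    have hyn := hKbd y hy
    have h1 : ∀ w : EuclideanSpace ℝ (Fin m), ‖w‖ ≤ (1 + t) * c⁻¹ → f w ≤ C * ((1 + t) * c⁻¹) := by
      intro w hw
      calc f w ≤ C * ‖w‖ := (hbd w).2
        _ ≤ C * ((1 + t) * c⁻¹) := by gcongr
    have e1 : ‖x + t • y‖ ≤ (1 + t) * c⁻¹ := by
      calc ‖x + t • y‖ ≤ ‖x‖ + ‖t • y‖ := norm_add_le _ _
        _ = ‖x‖ + t * ‖y‖ := by rw [norm_smul, Real.norm_eq_abs, abs_of_pos ht]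
        _ ≤ c⁻¹ + t * c⁻¹ := by gcongr
        _ = (1 + t) * c⁻¹ := by ring
    have e2 : ‖x - t • y‖ ≤ (1 + t) * c⁻¹ := by
      calc ‖x - t • y‖ ≤ ‖x‖ + ‖t • y‖ := norm_sub_le _ _
        _ = ‖x‖ + t * ‖y‖ := by rw [norm_smul, Real.norm_eq_abs, abs_of_pos ht]
        _ ≤ c⁻¹ + t * c⁻¹ := by gcongr
        _ = (1 + t) * c⁻¹ := by ring
    have := h1 _ e1; have := h1 _ e2
    linarith
  have hS₁bdd : BddAbove S₁ := by
    refine ⟨2 * C * c⁻¹ + t * (2 * C * c⁻¹), ?_⟩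
    rintro _ ⟨a, b, ha, hb, rfl⟩
    have hna := hnorm_of_star a ha
    have hnb := hnorm_of_star b hb
    have h1 : fstar (a + b) ≤ 2 * C * c⁻¹ := by
      calc fstar (a + b) ≤ ‖a + b‖ * c⁻¹ := hstar_le_norm _
        _ ≤ (C + C) * c⁻¹ := by
            have := (norm_add_le a b).trans (add_le_add hna hnb)
            gcongr
        _ = 2 * C * c⁻¹ := by ring
    have h2 : fstar (a - b) ≤ 2 * C * c⁻¹ := by
      calc fstar (a - b) ≤ ‖a - b‖ * c⁻¹ := hstar_le_norm _
        _ ≤ (C + C) * c⁻¹ := by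
            have := (norm_sub_le a b).trans (add_le_add hna hnb)
            gcongr
        _ = 2 * C * c⁻¹ := by ring
    have := mul_le_mul_of_nonneg_left h2 ht.le
    linarith
  have h0S₂ : (0 : ℝ) ∈ S₂ := by
    refine ⟨0, 0, by simp [hf0], by simp [hf0], ?_⟩
    rw [smul_zero, add_zero, sub_zero, hf0]
    ring
  apply le_antisymm
  · refine Real.sSup_le ?_ (le_csSup hS₂bdd h0S₂)
    rintro _ ⟨a, b, ha, hb, rfl⟩
    refine le_of_forall_pos_le_add ?_
    intro ε hε
    have h1 : fstar (a + b) - ε / 2 < sSup ((fun x => ⟪a + b, x⟫) '' K) := by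
      rw [← hfstar]; linarith
    obtain ⟨_, ⟨x, hx, rfl⟩, hxgt⟩ := exists_lt_of_lt_csSup (Set.Nonempty.image _ hKne) h1
    have h2 : fstar (a - b) - ε / (2 * t) < sSup ((fun x => ⟪a - b, x⟫) '' K) := by
      rw [← hfstar]
      have : 0 < ε / (2 * t) := by positivity
      linarith
    obtain ⟨_, ⟨y, hy, rfl⟩, hygt⟩ := exists_lt_of_lt_csSup (Set.Nonempty.image _ hKne) h2
    simp only at hxgt hygt
    have key : ⟪a + b, x⟫ + t * ⟪a - b, y⟫ = ⟪a, x + t • y⟫ + ⟪b, x - t • y⟫ := by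
      simp only [inner_add_left, inner_sub_left, inner_add_right, inner_sub_right,
        real_inner_smul_right]
      ring
    have hmem : f (x + t • y) + f (x - t • y) ∈ S₂ := ⟨x, y, hx, hy, rfl⟩
    have hle : ⟪a, x + t • y⟫ + ⟪b, x - t • y⟫ ≤ sSup S₂ :=
      (add_le_add (hpolar_le a _ ha) (hpolar_le b _ hb)).trans (le_csSup hS₂bdd hmem)
    have ht2 : t * (ε / (2 * t)) = ε / 2 := by field_simp
    nlinarith [mul_lt_mul_of_pos_left hygt ht]
  · refine Real.sSup_le ?_ ?_
    · rintro _ ⟨x, y, hx, hy, rfl⟩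
      obtain ⟨a, ha1, ha2⟩ := bipolar (x + t • y)
      obtain ⟨b, hb1, hb2⟩ := bipolar (x - t • y)
      have key : ⟪a, x + t • y⟫ + ⟪b, x - t • y⟫ = ⟪a + b, x⟫ + t * ⟪a - b, y⟫ := by
        simp only [inner_add_left, inner_sub_left, inner_add_right, inner_sub_right,
          real_inner_smul_right]
        ring
      have hle : ⟪a + b, x⟫ + t * ⟪a - b, y⟫ ≤ fstar (a + b) + t * fstar (a - b) := by
        have h1 := hstar_ge (a + b) x hx
        have h2 := hstar_ge (a - b) y hy
        have := mul_le_mul_of_nonneg_left h2 ht.le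
        linarith
      have hmem : fstar (a + b) + t * fstar (a - b) ∈ S₁ := ⟨a, b, ha1, hb1, rfl⟩
      calc f (x + t • y) + f (x - t • y) = ⟪a + b, x⟫ + t * ⟪a - b, y⟫ := by
            rw [← key, ha2, hb2]
        _ ≤ fstar (a + b) + t * fstar (a - b) := hle
        _ ≤ sSup S₁ := le_csSup hS₁bdd hmem
    · have h0 : fstar (0 : EuclideanSpace ℝ (Fin m)) ≤ 1 := by
        rw [hfstar 0]
        refine Real.sSup_le ?_ zero_le_one
        rintro _ ⟨x, hx, rfl⟩; simp
      have hmem : fstar (0 + 0 : EuclideanSpace ℝ (Fin m)) +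
          t * fstar (0 - 0 : EuclideanSpace ℝ (Fin m)) ∈ S₁ := ⟨0, 0, h0, h0, rfl⟩
      refine le_trans ?_ (le_csSup hS₁bdd hmem)
      have h1 := hstar_nonneg (0 + 0 : EuclideanSpace ℝ (Fin m))
      have h2 := hstar_nonneg (0 - 0 : EuclideanSpace ℝ (Fin m))
      nlinarith
end

section
/- Let N be a norm on ℝ^m with dual norm N*, and suppose there is c > 0 such that N*((a + b)/2) ≤ 1 − c·N*(a − b)² whenever N*(a) ≤ 1 and N*(b) ≤ 1 (2-uniform convexity of the dual unit ball). Suppose N is differentiable at v ≠ 0. Then for every v* with N*(v*) ≤ 1 one has ⟨DN(v) − v*, v⟩ ≥ 2c · N(v) · N*(DN(v) − v*)². In particular, since N and N* are each comparable to the Euclidean norm, there is a constant c' > 0 such that for all unit vectors v and all v* in the dual unit ball, ⟨DN(v) − v*, v⟩ ≥ c' |DN(v) − v*|². -/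
open RealInnerProductSpace

section Aux

variable {m : ℕ} (N : EuclideanSpace ℝ (Fin m) → ℝ)
    (haddle : ∀ x y, N (x + y) ≤ N x + N y)
    (hsmul : ∀ (c : ℝ) x, N (c • x) = |c| * N x)
    (hzero : ∀ x, N x = 0 ↔ x = 0)

include haddle hsmul hzero

lemma aux_zero : N 0 = 0 := (hzero 0).mpr rfl

lemma aux_nonneg : ∀ x, 0 ≤ N x := by
  intro x
  have h0 : N 0 = 0 := aux_zero N haddle hsmul hzero
  have h1 : N 0 ≤ N x + N (-x) := by
    have := haddle x (-x); simpa using this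
  have h2 : N (-x) = N x := by
    have := hsmul (-1) x; simpa using this
  nlinarith [h1, h2, h0]

lemma aux_upper : ∃ K : ℝ, 0 < K ∧ ∀ x, N x ≤ K * ‖x‖ := by
  classical
  have h0 : N 0 = 0 := aux_zero N haddle hsmul hzero
  have hsum : ∀ (s : Finset (Fin m)) (f : Fin m → EuclideanSpace ℝ (Fin m)),
      N (∑ i ∈ s, f i) ≤ ∑ i ∈ s, N (f i) := by
    intro s
    induction s using Finset.induction with
    | empty => intro f; simp [h0]
    | @insert a s hnot ih =>
      intro f
      rw [Finset.sum_insert hnot, Finset.sum_insert hnot]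
      exact le_trans (haddle _ _) (by gcongr; exact ih f)
  refine ⟨(∑ i, N (EuclideanSpace.single i (1:ℝ))) + 1, ?_, ?_⟩
  · have : 0 ≤ ∑ i, N (EuclideanSpace.single i (1:ℝ)) :=
      Finset.sum_nonneg fun i _ => aux_nonneg N haddle hsmul hzero _
    linarith
  · intro x
    have hx : x = ∑ i, x i • EuclideanSpace.single i (1:ℝ) := by
      ext j
      rw [WithLp.ofLp_sum, Finset.sum_apply]
      simp [EuclideanSpace.single_apply]
    have habs : ∀ i, |x i| ≤ ‖x‖ := by
      intro i
      have h := abs_real_inner_le_norm (EuclideanSpace.single i (1:ℝ)) x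
      rw [EuclideanSpace.inner_single_left] at h
      simpa using h
    calc N x = N (∑ i, x i • EuclideanSpace.single i (1:ℝ)) := by rw [← hx]
      _ ≤ ∑ i, N (x i • EuclideanSpace.single i (1:ℝ)) := hsum _ _
      _ = ∑ i, |x i| * N (EuclideanSpace.single i (1:ℝ)) := by
          simp [hsmul]
      _ ≤ ∑ i, ‖x‖ * N (EuclideanSpace.single i (1:ℝ)) := by
          gcongr with i
          · exact aux_nonneg N haddle hsmul hzero _
          · exact habs i
      _ = (∑ i, N (EuclideanSpace.single i (1:ℝ))) * ‖x‖ := by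
          rw [← Finset.mul_sum]; ring
      _ ≤ ((∑ i, N (EuclideanSpace.single i (1:ℝ))) + 1) * ‖x‖ := by
          have : (0:ℝ) ≤ ‖x‖ := norm_nonneg x
          nlinarith

lemma aux_cont : Continuous N := by
  obtain ⟨K, hK, hKle⟩ := aux_upper N haddle hsmul hzero
  have hlip : LipschitzWith (Real.toNNReal K) N := by
    apply LipschitzWith.of_dist_le_mul
    intro x y
    have h1 : N x - N y ≤ N (x - y) := by
      have := haddle (x - y) y; simp at this; linarith
    have h2 : N y - N x ≤ N (x - y) := by
      have := haddle (y - x) x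
      have hneg : N (y - x) = N (x - y) := by
        have h := hsmul (-1) (x - y)
        simp only [neg_smul, one_smul, abs_neg, abs_one, one_mul] at h
        rw [show y - x = -(x - y) by abel, h]
      simp at this; linarith [hneg]
    have h3 : |N x - N y| ≤ N (x - y) := abs_sub_le_iff.mpr ⟨h1, h2⟩
    have h4 : N (x - y) ≤ K * ‖x - y‖ := hKle _
    rw [Real.dist_eq, dist_eq_norm, Real.coe_toNNReal _ hK.le]
    linarith
  exact hlip.continuous

lemma aux_lower : ∃ ε : ℝ, 0 < ε ∧ ∀ x, ε * ‖x‖ ≤ N x := by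
  by_cases hm : Nonempty (Metric.sphere (0 : EuclideanSpace ℝ (Fin m)) 1)
  · obtain ⟨⟨x₀, hx₀⟩⟩ := hm
    have hcompact : IsCompact (Metric.sphere (0 : EuclideanSpace ℝ (Fin m)) 1) :=
      isCompact_sphere 0 1
    obtain ⟨z, hz, hzmin⟩ := hcompact.exists_isMinOn ⟨x₀, hx₀⟩
      ((aux_cont N haddle hsmul hzero).continuousOn)
    have hznorm : ‖z‖ = 1 := by simpa using hz
    have hzne : z ≠ 0 := by intro h; rw [h] at hznorm; simp at hznorm
    have hNz : 0 < N z := by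
      rcases lt_or_eq_of_le (aux_nonneg N haddle hsmul hzero z) with h | h
      · exact h
      · exact absurd ((hzero z).mp h.symm) hzne
    refine ⟨N z, hNz, fun x => ?_⟩
    by_cases hx : x = 0
    · simp [hx, aux_zero N haddle hsmul hzero]
    · have hxn : (0:ℝ) < ‖x‖ := norm_pos_iff.mpr hx
      have hmem : ‖x‖⁻¹ • x ∈ Metric.sphere (0 : EuclideanSpace ℝ (Fin m)) 1 := by
        simp [norm_smul, abs_of_pos (inv_pos.mpr hxn), inv_mul_cancel₀ hxn.ne']
      have hval : N (‖x‖⁻¹ • x) = ‖x‖⁻¹ * N x := by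
        rw [hsmul]; rw [abs_of_pos (inv_pos.mpr hxn)]
      have h5 : N z ≤ ‖x‖⁻¹ * N x := by
        have h6 := hzmin hmem
        simpa [hval] using h6
      calc N z * ‖x‖ ≤ (‖x‖⁻¹ * N x) * ‖x‖ := mul_le_mul_of_nonneg_right h5 hxn.le
        _ = N x := by field_simp
  · refine ⟨1, one_pos, fun x => ?_⟩
    by_cases hx : x = 0
    · simp [hx, aux_zero N haddle hsmul hzero]
    · exfalso
      have hxn : (0:ℝ) < ‖x‖ := norm_pos_iff.mpr hx
      exact hm ⟨⟨‖x‖⁻¹ • x, by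
        simp [norm_smul, abs_of_pos (inv_pos.mpr hxn), inv_mul_cancel₀ hxn.ne']⟩⟩

end Aux

section Deriv

variable {m : ℕ} {N : EuclideanSpace ℝ (Fin m) → ℝ}
    {v g : EuclideanSpace ℝ (Fin m)}

lemma aux_deriv_line (hg : HasGradientAt N g v) (x : EuclideanSpace ℝ (Fin m)) :
    HasDerivAt (fun t : ℝ => N (v + t • x)) ⟪g, x⟫ 0 := by
  have hline : HasDerivAt (fun t : ℝ => v + t • x) x 0 := by
    simpa using ((hasDerivAt_id (0:ℝ)).smul_const x).const_add v
  have hF : HasFDerivAt N (InnerProductSpace.toDual ℝ _ g) v :=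
    hasGradientAt_iff_hasFDerivAt.mp hg
  have hF' : HasFDerivAt N (InnerProductSpace.toDual ℝ _ g)
      ((fun t : ℝ => v + t • x) 0) := by simpa using hF
  have := hF'.comp_hasDerivAt 0 hline
  simpa [Function.comp_def, InnerProductSpace.toDual_apply_apply] using this

lemma aux_inner_self
    (hsmul : ∀ (c : ℝ) x, N (c • x) = |c| * N x)
    (hg : HasGradientAt N g v) : ⟪g, v⟫ = N v := by
  have hd1 : HasDerivAt (fun t : ℝ => N (v + t • v)) ⟪g, v⟫ 0 := aux_deriv_line hg v
  have hd2 : HasDerivAt (fun t : ℝ => (1 + t) * N v) (N v) 0 := by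
    simpa using ((hasDerivAt_id (0:ℝ)).const_add 1).mul_const (N v)
  have heq : (fun t : ℝ => N (v + t • v)) =ᶠ[nhds (0:ℝ)] (fun t : ℝ => (1 + t) * N v) := by
    filter_upwards [Metric.ball_mem_nhds (0:ℝ) one_pos] with t ht
    have ht' : |t| < 1 := by simpa [Real.dist_eq] using ht
    have h1 : v + t • v = (1 + t) • v := by module
    rw [h1, hsmul, abs_of_pos (by cases abs_lt.mp ht'; linarith)]
  exact hd1.unique (hd2.congr_of_eventuallyEq heq)

lemma aux_inner_le
    (haddle : ∀ x y, N (x + y) ≤ N x + N y)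
    (hsmul : ∀ (c : ℝ) x, N (c • x) = |c| * N x)
    (hg : HasGradientAt N g v) (x : EuclideanSpace ℝ (Fin m)) : ⟪g, x⟫ ≤ N x := by
  have hd : HasDerivAt (fun t : ℝ => N (v + t • x)) ⟪g, x⟫ 0 := aux_deriv_line hg x
  have htend : Filter.Tendsto (slope (fun t : ℝ => N (v + t • x)) 0)
      (nhdsWithin 0 (Set.Ioi 0)) (nhds ⟪g, x⟫) :=
    (hasDerivAt_iff_tendsto_slope.mp hd).mono_left
      (nhdsWithin_mono 0 fun t ht => ne_of_gt ht)
  refine le_of_tendsto htend ?_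
  filter_upwards [self_mem_nhdsWithin] with t ht
  have ht' : (0:ℝ) < t := ht
  have h1 : N (v + t • x) ≤ N v + t * N x := by
    calc N (v + t • x) ≤ N v + N (t • x) := haddle v (t • x)
      _ = N v + |t| * N x := by rw [hsmul]
      _ = N v + t * N x := by rw [abs_of_pos ht']
  have : slope (fun t : ℝ => N (v + t • x)) 0 t
      = (N (v + t • x) - N (v + (0:ℝ) • x)) / t := by
    simp [slope_def_field, div_eq_inv_mul, mul_comm]
  rw [this]
  rw [div_le_iff₀ ht']
  simp only [zero_smul, add_zero] at *
  linarith

end Deriv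

section Star

variable {m : ℕ} {N : EuclideanSpace ℝ (Fin m) → ℝ}
    {Nstar : EuclideanSpace ℝ (Fin m) → ℝ}

lemma aux_bdd (haddle : ∀ x y, N (x + y) ≤ N x + N y)
    (hsmul : ∀ (c : ℝ) x, N (c • x) = |c| * N x)
    (hzero : ∀ x, N x = 0 ↔ x = 0) (w : EuclideanSpace ℝ (Fin m)) :
    BddAbove ((fun x => ⟪w, x⟫) '' {x | N x ≤ 1}) := by
  obtain ⟨ε, hε, hle⟩ := aux_lower N haddle hsmul hzero
  refine ⟨‖w‖ * ε⁻¹, ?_⟩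
  rintro y ⟨x, hx, rfl⟩
  have h1 : ε * ‖x‖ ≤ 1 := le_trans (hle x) hx
  have h2 : ‖x‖ ≤ ε⁻¹ := by
    rw [← one_div, le_div_iff₀ hε]; linarith
  calc ⟪w, x⟫ ≤ ‖w‖ * ‖x‖ := real_inner_le_norm w x
    _ ≤ ‖w‖ * ε⁻¹ := by gcongr

lemma aux_duality (haddle : ∀ x y, N (x + y) ≤ N x + N y)
    (hsmul : ∀ (c : ℝ) x, N (c • x) = |c| * N x)
    (hzero : ∀ x, N x = 0 ↔ x = 0)
    (hNstar : ∀ w, Nstar w = sSup ((fun x => ⟪w, x⟫) '' {x | N x ≤ 1}))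
    (w x : EuclideanSpace ℝ (Fin m)) : ⟪w, x⟫ ≤ Nstar w * N x := by
  by_cases hx : x = 0
  · simp [hx, aux_zero N haddle hsmul hzero]
  · have hNx : 0 < N x := by
      rcases lt_or_eq_of_le (aux_nonneg N haddle hsmul hzero x) with h | h
      · exact h
      · exact absurd ((hzero x).mp h.symm) hx
    have hy : N ((N x)⁻¹ • x) ≤ 1 := by
      rw [hsmul, abs_of_pos (inv_pos.mpr hNx), inv_mul_cancel₀ hNx.ne']
    have hmem : ⟪w, (N x)⁻¹ • x⟫ ∈ (fun x => ⟪w, x⟫) '' {x | N x ≤ 1} :=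
      ⟨(N x)⁻¹ • x, hy, rfl⟩
    have hle : ⟪w, (N x)⁻¹ • x⟫ ≤ Nstar w := by
      rw [hNstar]
      exact le_csSup (aux_bdd haddle hsmul hzero w) hmem
    rw [real_inner_smul_right] at hle
    have := mul_le_mul_of_nonneg_right hle hNx.le
    calc ⟪w, x⟫ = ((N x)⁻¹ * ⟪w, x⟫) * N x := by field_simp
      _ ≤ Nstar w * N x := this

lemma aux_nstar_lower (haddle : ∀ x y, N (x + y) ≤ N x + N y)
    (hsmul : ∀ (c : ℝ) x, N (c • x) = |c| * N x)
    (hzero : ∀ x, N x = 0 ↔ x = 0)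
    (hNstar : ∀ w, Nstar w = sSup ((fun x => ⟪w, x⟫) '' {x | N x ≤ 1})) :
    ∃ K : ℝ, 0 < K ∧ ∀ y, K * ‖y‖ ≤ Nstar y := by
  obtain ⟨K, hK, hKle⟩ := aux_upper N haddle hsmul hzero
  refine ⟨K⁻¹, inv_pos.mpr hK, fun y => ?_⟩
  by_cases hy : y = 0
  · rw [hy, hNstar]
    simp only [norm_zero, mul_zero]
    refine le_csSup (aux_bdd haddle hsmul hzero 0) ⟨0, ?_, by simp⟩
    simp [aux_zero N haddle hsmul hzero]
  · have hyn : (0:ℝ) < ‖y‖ := norm_pos_iff.mpr hy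
    set x := (K⁻¹ * ‖y‖⁻¹) • y with hxdef
    have hNx : N x ≤ 1 := by
      calc N x ≤ K * ‖x‖ := hKle x
        _ = K * (K⁻¹ * ‖y‖⁻¹ * ‖y‖) := by
            rw [hxdef, norm_smul]
            congr 1
            rw [Real.norm_eq_abs, abs_of_pos (by positivity)]
        _ = 1 := by field_simp
    have hmem : ⟪y, x⟫ ∈ (fun x => ⟪y, x⟫) '' {x | N x ≤ 1} := ⟨x, hNx, rfl⟩
    have hle : ⟪y, x⟫ ≤ Nstar y := by
      rw [hNstar]; exact le_csSup (aux_bdd haddle hsmul hzero y) hmem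
    have hval : ⟪y, x⟫ = K⁻¹ * ‖y‖ := by
      rw [hxdef, real_inner_smul_right, real_inner_self_eq_norm_sq]
      field_simp
    linarith [hval ▸ hle]

lemma aux_nstar_g (haddle : ∀ x y, N (x + y) ≤ N x + N y)
    (hsmul : ∀ (c : ℝ) x, N (c • x) = |c| * N x)
    (hNstar : ∀ w, Nstar w = sSup ((fun x => ⟪w, x⟫) '' {x | N x ≤ 1}))
    {v g : EuclideanSpace ℝ (Fin m)} (hg : HasGradientAt N g v) : Nstar g ≤ 1 := by
  rw [hNstar]
  apply Real.sSup_le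
  · rintro y ⟨x, hx, rfl⟩
    exact le_trans (aux_inner_le haddle hsmul hg x) hx
  · exact zero_le_one

lemma aux_key (haddle : ∀ x y, N (x + y) ≤ N x + N y)
    (hsmul : ∀ (c : ℝ) x, N (c • x) = |c| * N x)
    (hzero : ∀ x, N x = 0 ↔ x = 0)
    (hNstar : ∀ w, Nstar w = sSup ((fun x => ⟪w, x⟫) '' {x | N x ≤ 1}))
    {c : ℝ} (hc : 0 < c)
    (huc : ∀ a b, Nstar a ≤ 1 → Nstar b ≤ 1 →
      Nstar ((1 / 2 : ℝ) • (a + b)) ≤ 1 - c * (Nstar (a - b)) ^ 2)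
    {v g : EuclideanSpace ℝ (Fin m)} (hg : HasGradientAt N g v)
    (vs : EuclideanSpace ℝ (Fin m)) (hvs : Nstar vs ≤ 1) :
    2 * c * N v * (Nstar (g - vs)) ^ 2 ≤ ⟪g - vs, v⟫ := by
  have hgstar : Nstar g ≤ 1 := aux_nstar_g haddle hsmul hNstar hg
  have h1 := huc g vs hgstar hvs
  have h2 : ⟪(1 / 2 : ℝ) • (g + vs), v⟫ ≤ Nstar ((1 / 2 : ℝ) • (g + vs)) * N v :=
    aux_duality haddle hsmul hzero hNstar _ _
  have hNv : 0 ≤ N v := aux_nonneg N haddle hsmul hzero v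
  have h3 : Nstar ((1 / 2 : ℝ) • (g + vs)) * N v ≤ (1 - c * (Nstar (g - vs)) ^ 2) * N v :=
    mul_le_mul_of_nonneg_right h1 hNv
  have h4 : ⟪g, v⟫ = N v := aux_inner_self hsmul hg
  have h5 : ⟪(1 / 2 : ℝ) • (g + vs), v⟫ = (⟪g, v⟫ + ⟪vs, v⟫) / 2 := by
    rw [real_inner_smul_left, inner_add_left]; ring
  have h6 : ⟪g - vs, v⟫ = ⟪g, v⟫ - ⟪vs, v⟫ := inner_sub_left g vs v
  nlinarith [h2, h3]

end Star


/-- Quantitative Fenchel-type inequality: if the dual unit ball of a norm `N` is 2-uniformly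
convex, and `N` is differentiable at `v ≠ 0`, then `⟨DN(v) − v*, v⟩ ≥ 2c N(v) N*(DN(v) − v*)²`
for every `v*` in the dual unit ball; in particular there is `c' > 0` with
`⟨DN(w) − v*, w⟩ ≥ c' |DN(w) − v*|²` for all unit vectors `w` and dual-unit-ball `v*`. -/
theorem quantitative_fenchel {m : ℕ} (N : EuclideanSpace ℝ (Fin m) → ℝ)
    (haddle : ∀ x y, N (x + y) ≤ N x + N y)
    (hsmul : ∀ (c : ℝ) x, N (c • x) = |c| * N x)
    (hzero : ∀ x, N x = 0 ↔ x = 0)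
    (Nstar : EuclideanSpace ℝ (Fin m) → ℝ)
    (hNstar : ∀ w, Nstar w = sSup ((fun x => ⟪w, x⟫) '' {x | N x ≤ 1}))
    (c : ℝ) (hc : 0 < c)
    (huc : ∀ a b, Nstar a ≤ 1 → Nstar b ≤ 1 →
      Nstar ((1 / 2 : ℝ) • (a + b)) ≤ 1 - c * (Nstar (a - b)) ^ 2)
    (v g : EuclideanSpace ℝ (Fin m)) (hv : v ≠ 0)
    (hg : HasGradientAt N g v) :
    (∀ vs, Nstar vs ≤ 1 → 2 * c * N v * (Nstar (g - vs)) ^ 2 ≤ ⟪g - vs, v⟫) ∧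
    (∃ c' : ℝ, 0 < c' ∧ ∀ (w g' : EuclideanSpace ℝ (Fin m)), ‖w‖ = 1 →
      HasGradientAt N g' w → ∀ vs, Nstar vs ≤ 1 →
        c' * ‖g' - vs‖ ^ 2 ≤ ⟪g' - vs, w⟫) := by
  constructor
  · intro vs hvs
    exact aux_key haddle hsmul hzero hNstar hc huc hg vs hvs
  · obtain ⟨ε, hε, hεle⟩ := aux_lower N haddle hsmul hzero
    obtain ⟨K, hK, hKle⟩ := aux_nstar_lower haddle hsmul hzero hNstar
    refine ⟨2 * c * ε * K ^ 2, by positivity, fun w g' hw hg' vs hvs => ?_⟩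
    have hkey := aux_key haddle hsmul hzero hNstar hc huc hg' vs hvs
    have hNw : ε ≤ N w := by
      have := hεle w; rw [hw, mul_one] at this; exact this
    have hNs : K * ‖g' - vs‖ ≤ Nstar (g' - vs) := hKle _
    have hNs0 : 0 ≤ K * ‖g' - vs‖ := by positivity
    have hsq : (K * ‖g' - vs‖) ^ 2 ≤ (Nstar (g' - vs)) ^ 2 := by
      apply sq_le_sq' <;> nlinarith
    calc 2 * c * ε * K ^ 2 * ‖g' - vs‖ ^ 2 = 2 * c * ε * (K * ‖g' - vs‖) ^ 2 := by ring
      _ ≤ 2 * c * ε * (Nstar (g' - vs)) ^ 2 := by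
          have := mul_le_mul_of_nonneg_left hsq (by positivity : (0:ℝ) ≤ 2 * c * ε)
          linarith
      _ ≤ 2 * c * N w * (Nstar (g' - vs)) ^ 2 := by
          have h8 : 0 ≤ (Nstar (g' - vs)) ^ 2 := sq_nonneg _
          have h9 : 2 * c * ε ≤ 2 * c * N w :=
            mul_le_mul_of_nonneg_left hNw (by positivity)
          exact mul_le_mul_of_nonneg_right h9 h8
      _ ≤ ⟪g' - vs, w⟫ := hkey
end

section
/- Let d ≥ 3, t ≥ 0, and define u(x) = t(d − 1)/|x| and z(x) = −x/|x| on ℝ^d \ {0}. Then |z(x)| = 1, div z(x) = −(d − 1)/|x|, and ⟨z(x), ∇u(x)⟩ = |∇u(x)| = t(d − 1)/|x|² for every x ≠ 0. In particular, with h̄(x) = (1 + t)(d − 1)/|x|, one has −div z(x) = h̄(x) − u(x)... i.e. div z = u − h̄. -/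
open RealInnerProductSpace

section aux

variable {F : Type*} [NormedAddCommGroup F] [InnerProductSpace ℝ F]

lemma hasFDerivAt_norm_of_ne' {x : F} (hx : x ≠ 0) :
    HasFDerivAt (fun y : F => ‖y‖) (‖x‖⁻¹ • innerSL ℝ x) x := by
  have hnx : ‖x‖ ≠ 0 := norm_ne_zero_iff.mpr hx
  have h1 : HasFDerivAt (fun y : F => ‖y‖ ^ 2) (2 • innerSL ℝ x) x :=
    (hasStrictFDerivAt_norm_sq x).hasFDerivAt
  have hs : (‖x‖ : ℝ) ^ 2 ≠ 0 := pow_ne_zero _ hnx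
  have h2 := (Real.hasDerivAt_sqrt hs).comp_hasFDerivAt x h1
  have heq : (fun y : F => Real.sqrt (‖y‖ ^ 2)) = fun y : F => ‖y‖ := by
    funext y; rw [Real.sqrt_sq (norm_nonneg y)]
  simp only [Function.comp_def] at h2
  rw [heq] at h2
  refine h2.congr_fderiv ?_
  rw [Real.sqrt_sq (norm_nonneg x)]
  ext v
  simp only [ContinuousLinearMap.coe_smul', Pi.smul_apply, smul_eq_mul,
    ContinuousLinearMap.smul_apply, nsmul_eq_mul, Nat.cast_ofNat]
  field_simp

lemma hasFDerivAt_inv_norm {x : F} (hx : x ≠ 0) :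
    HasFDerivAt (fun y : F => ‖y‖⁻¹) ((-(‖x‖ ^ 3)⁻¹) • innerSL ℝ x) x := by
  have hnx : ‖x‖ ≠ 0 := norm_ne_zero_iff.mpr hx
  have h := (hasDerivAt_inv hnx).comp_hasFDerivAt x (hasFDerivAt_norm_of_ne' hx)
  have h' : HasFDerivAt (fun y : F => ‖y‖⁻¹) (-(‖x‖ ^ 2)⁻¹ • ‖x‖⁻¹ • innerSL ℝ x) x := h
  rw [smul_smul] at h'
  have hs2 : -(‖x‖ ^ 2)⁻¹ * ‖x‖⁻¹ = -(‖x‖ ^ 3)⁻¹ := by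
    field_simp
  rw [hs2] at h'
  exact h'

end aux

/-- Verification of the pointwise Euler–Lagrange conditions for the ROF counterexample:
for `d ≥ 3`, `t ≥ 0`, `u(x) = t(d−1)/|x|`, `z(x) = −x/|x|`, `h̄(x) = (1+t)(d−1)/|x|`, one has
`|z| = 1`, `div z = −(d−1)/|x|`, `⟨z, ∇u⟩ = |∇u| = t(d−1)/|x|²`, and `div z = u − h̄`. -/
theorem rof_counterexample_conditions (d : ℕ) (hd : 3 ≤ d) (t : ℝ) (ht : 0 ≤ t)
    (x : EuclideanSpace ℝ (Fin d)) (hx : x ≠ 0) :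
    let u : EuclideanSpace ℝ (Fin d) → ℝ := fun y => t * ((d : ℝ) - 1) / ‖y‖
    let z : EuclideanSpace ℝ (Fin d) → EuclideanSpace ℝ (Fin d) := fun y => -(‖y‖⁻¹ • y)
    let hbar : EuclideanSpace ℝ (Fin d) → ℝ := fun y => (1 + t) * ((d : ℝ) - 1) / ‖y‖
    ‖z x‖ = 1 ∧
    (∑ i, fderiv ℝ z x (EuclideanSpace.single i 1) i) = -(((d : ℝ) - 1) / ‖x‖) ∧
    ⟪z x, gradient u x⟫ = ‖gradient u x‖ ∧
    ‖gradient u x‖ = t * ((d : ℝ) - 1) / ‖x‖ ^ 2 ∧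
    (∑ i, fderiv ℝ z x (EuclideanSpace.single i 1) i) = u x - hbar x := by
  intro u z hbar
  have hnx : ‖x‖ ≠ 0 := norm_ne_zero_iff.mpr hx
  have hnx0 : 0 < ‖x‖ := norm_pos_iff.mpr hx
  set c : ℝ := t * ((d : ℝ) - 1) with hc
  have hc0 : 0 ≤ c := by
    apply mul_nonneg ht
    have : (3 : ℝ) ≤ (d : ℝ) := by exact_mod_cast hd
    linarith
  -- gradient of u
  have hu : HasFDerivAt u ((-c * (‖x‖ ^ 3)⁻¹) • innerSL ℝ x) x := by
    have h := (hasFDerivAt_inv_norm hx).const_mul c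
    have : u = fun y => c * ‖y‖⁻¹ := by
      funext y; simp [u, hc, div_eq_mul_inv]
    rw [this]
    refine h.congr_fderiv ?_
    ext v
    simp only [ContinuousLinearMap.smul_apply, smul_eq_mul]
    ring
  have hgrad : gradient u x = (-c * (‖x‖ ^ 3)⁻¹) • x := by
    apply HasGradientAt.gradient
    rw [hasGradientAt_iff_hasFDerivAt]
    refine hu.congr_fderiv ?_
    ext v
    simp [InnerProductSpace.toDual_apply_apply, real_inner_smul_left]
  -- fderiv of z
  have hz : HasFDerivAt z
      (-(‖x‖⁻¹ • ContinuousLinearMap.id ℝ (EuclideanSpace ℝ (Fin d)) +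
        ((-(‖x‖ ^ 3)⁻¹) • innerSL ℝ x).smulRight x)) x := by
    have h := ((hasFDerivAt_inv_norm hx).smul (hasFDerivAt_id x)).neg
    exact h
  have hzf : fderiv ℝ z x = -(‖x‖⁻¹ • ContinuousLinearMap.id ℝ (EuclideanSpace ℝ (Fin d)) +
        ((-(‖x‖ ^ 3)⁻¹) • innerSL ℝ x).smulRight x) := hz.fderiv
  have hinner : ∀ i, ⟪x, (EuclideanSpace.single i (1 : ℝ))⟫ = x i := by
    intro i
    simpa using EuclideanSpace.inner_single_right (𝕜 := ℝ) i 1 x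
  have hsum2 : ∑ i, x i * x i = ‖x‖ ^ 2 := by
    rw [← real_inner_self_eq_norm_sq]
    rw [PiLp.inner_apply]
    simp only [RCLike.inner_apply, conj_trivial]
  have hdiv : (∑ i, fderiv ℝ z x (EuclideanSpace.single i 1) i)
      = -(((d : ℝ) - 1) / ‖x‖) := by
    rw [hzf]
    have : ∀ i : Fin d, ((-(‖x‖⁻¹ • ContinuousLinearMap.id ℝ (EuclideanSpace ℝ (Fin d)) +
        ((-(‖x‖ ^ 3)⁻¹) • innerSL ℝ x).smulRight x)) (EuclideanSpace.single i 1)) i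
        = -(‖x‖⁻¹ * (EuclideanSpace.single i (1:ℝ)) i + (-(‖x‖ ^ 3)⁻¹) * (x i) * x i) := by
      intro i
      simp only [ContinuousLinearMap.neg_apply, ContinuousLinearMap.add_apply,
        ContinuousLinearMap.coe_smul', Pi.smul_apply, ContinuousLinearMap.coe_id', id_eq,
        ContinuousLinearMap.smulRight_apply, ContinuousLinearMap.smul_apply, smul_eq_mul,
        innerSL_apply_apply, hinner i, PiLp.neg_apply, PiLp.add_apply, PiLp.smul_apply]
      try ring
    rw [Finset.sum_congr rfl fun i _ => this i]
    have hsingle : ∀ i : Fin d, (EuclideanSpace.single i (1:ℝ)) i = 1 := by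
      intro i; simp
    simp only [hsingle]
    rw [Finset.sum_neg_distrib, Finset.sum_add_distrib]
    have h1 : ∑ _i : Fin d, ‖x‖⁻¹ * 1 = (d : ℝ) * ‖x‖⁻¹ := by
      simp [Finset.sum_const, mul_comm]
    have h2 : ∑ i : Fin d, (-(‖x‖ ^ 3)⁻¹) * (x i) * x i = -(‖x‖⁻¹) := by
      have haux : ∀ i : Fin d, (-(‖x‖ ^ 3)⁻¹) * (x i) * x i
          = (-(‖x‖ ^ 3)⁻¹) * (x i * x i) := fun i => by ring
      rw [Finset.sum_congr rfl fun i _ => haux i, ← Finset.mul_sum, hsum2]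
      field_simp
    rw [h1, h2]
    field_simp
    ring
  have hnp : -c * (‖x‖ ^ 3)⁻¹ ≤ 0 := by
    have h0 : 0 ≤ c * (‖x‖ ^ 3)⁻¹ := by positivity
    nlinarith
  refine ⟨?_, hdiv, ?_, ?_, ?_⟩
  · simp only [z, norm_neg, norm_smul, norm_inv, norm_norm]
    field_simp
  · rw [hgrad]
    simp only [z, real_inner_smul_right, inner_neg_left, real_inner_smul_left,
      real_inner_self_eq_norm_sq, norm_smul, Real.norm_eq_abs]
    rw [abs_of_nonpos hnp]
    field_simp
  · rw [hgrad]
    rw [norm_smul, Real.norm_eq_abs, abs_of_nonpos hnp]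
    rw [hc]
    field_simp
  · rw [hdiv]
    simp only [u, hbar]
    field_simp
    ring
end

section
/- There exists a constant c > 0 (independent of dimensions) such that for all vectors a, b ∈ ℝ^n and all unit vectors v₁, v₂ ∈ ℝ^d, the rank-one matrices satisfy ‖a ⊗ v₁ − b ⊗ v₂‖ ≥ c · min(‖a‖, ‖b‖) · min(‖v₁ − v₂‖, ‖v₁ + v₂‖), where ‖·‖ on matrices is the Frobenius (Hilbert–Schmidt) norm. -/
lemma sum_sq_eq_norm_sq {m : ℕ} (x : EuclideanSpace ℝ (Fin m)) :
    ∑ i, x i ^ 2 = ‖x‖ ^ 2 := by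
  rw [EuclideanSpace.norm_eq, Real.sq_sqrt (by positivity)]
  simp [Real.norm_eq_abs, sq_abs]

lemma inner_eq_sum {m : ℕ} (x y : EuclideanSpace ℝ (Fin m)) :
    (inner ℝ x y : ℝ) = ∑ i, x i * y i := by
  simp [PiLp.inner_apply, RCLike.inner_apply, mul_comm]

/-- There is a dimension-independent constant `c > 0` such that for all `a, b ∈ ℝ^n` and unit
vectors `v₁, v₂ ∈ ℝ^d`, the Frobenius norm of the difference of the rank-one matrices satisfies
`‖a ⊗ v₁ − b ⊗ v₂‖_F ≥ c · min(‖a‖,‖b‖) · min(‖v₁−v₂‖,‖v₁+v₂‖)`. -/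
theorem rank_one_difference_lower_bound :
    ∃ c : ℝ, 0 < c ∧ ∀ (n d : ℕ) (a b : EuclideanSpace ℝ (Fin n))
      (v₁ v₂ : EuclideanSpace ℝ (Fin d)), ‖v₁‖ = 1 → ‖v₂‖ = 1 →
      c * min ‖a‖ ‖b‖ * min ‖v₁ - v₂‖ ‖v₁ + v₂‖ ≤
        Real.sqrt (∑ i, ∑ j, (a i * v₁ j - b i * v₂ j) ^ 2) := by
  refine ⟨1, one_pos, ?_⟩
  intro n d a b v₁ v₂ h1 h2
  set A := ‖a‖ with hA
  set B := ‖b‖ with hB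
  have hA0 : (0:ℝ) ≤ A := norm_nonneg _
  have hB0 : (0:ℝ) ≤ B := norm_nonneg _
  set t : ℝ := inner ℝ v₁ v₂ with ht
  set s : ℝ := inner ℝ a b with hs
  have hts : |t| ≤ 1 := by
    rw [ht, show (1:ℝ) = ‖v₁‖ * ‖v₂‖ by rw [h1, h2]; ring]
    exact abs_real_inner_le_norm v₁ v₂
  have hss : |s| ≤ A * B := abs_real_inner_le_norm a b
  have hsub : ‖v₁ - v₂‖ ^ 2 = 2 - 2 * t := by
    rw [norm_sub_sq_real, h1, h2, ← ht]; ring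
  have hadd : ‖v₁ + v₂‖ ^ 2 = 2 + 2 * t := by
    rw [norm_add_sq_real, h1, h2, ← ht]; ring
  have hv1 : ∑ j, v₁ j ^ 2 = 1 := by rw [sum_sq_eq_norm_sq, h1]; norm_num
  have hv2 : ∑ j, v₂ j ^ 2 = 1 := by rw [sum_sq_eq_norm_sq, h2]; norm_num
  have hT : ∑ j, v₁ j * v₂ j = t := (inner_eq_sum v₁ v₂).symm
  have hSv : ∑ i, a i * b i = s := (inner_eq_sum a b).symm
  have hS : ∑ i, ∑ j, (a i * v₁ j - b i * v₂ j) ^ 2 = A ^ 2 + B ^ 2 - 2 * s * t := by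
    have expand : ∀ i, ∑ j, (a i * v₁ j - b i * v₂ j) ^ 2
        = a i ^ 2 * (∑ j, v₁ j ^ 2) - 2 * (a i * b i) * (∑ j, v₁ j * v₂ j)
          + b i ^ 2 * (∑ j, v₂ j ^ 2) := by
      intro i
      rw [Finset.mul_sum, Finset.mul_sum, Finset.mul_sum, ← Finset.sum_sub_distrib,
        ← Finset.sum_add_distrib]
      exact Finset.sum_congr rfl fun j _ => by ring
    simp_rw [expand, hv1, hv2, hT, mul_one]
    rw [Finset.sum_add_distrib, Finset.sum_sub_distrib, sum_sq_eq_norm_sq, sum_sq_eq_norm_sq,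
      ← hA, ← hB]
    have : ∑ i, 2 * (a i * b i) * t = 2 * s * t := by
      rw [← Finset.sum_mul, ← Finset.mul_sum, hSv]
    rw [this]; ring
  rw [hS]
  set m := min A B with hm
  set w := min ‖v₁ - v₂‖ ‖v₁ + v₂‖ with hw
  have hm0 : 0 ≤ m := le_min hA0 hB0
  have hw0 : 0 ≤ w := le_min (norm_nonneg _) (norm_nonneg _)
  have hmAB : m ^ 2 ≤ A * B := by
    have h1 : m ≤ A := min_le_left _ _
    have h2 : m ≤ B := min_le_right _ _
    calc m ^ 2 = m * m := sq m
    _ ≤ A * B := mul_le_mul h1 h2 hm0 hA0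
  have hw1 : w ^ 2 ≤ 2 - 2 * t := by
    rw [← hsub]; exact pow_le_pow_left₀ hw0 (min_le_left _ _) 2
  have hw2 : w ^ 2 ≤ 2 + 2 * t := by
    rw [← hadd]; exact pow_le_pow_left₀ hw0 (min_le_right _ _) 2
  rw [one_mul]
  have hsle : s ≤ A * B := le_trans (le_abs_self s) hss
  have hsge : -(A * B) ≤ s := neg_le_of_abs_le hss
  have key : (m * w) ^ 2 ≤ A ^ 2 + B ^ 2 - 2 * s * t := by
    rw [mul_pow]
    rcases le_or_gt 0 t with htp | htn
    · have h5 : 0 ≤ t * (A * B - s) := mul_nonneg htp (by linarith)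
      nlinarith [sq_nonneg (A - B), mul_le_mul hmAB hw1 (sq_nonneg w) (mul_nonneg hA0 hB0)]
    · have h5 : 0 ≤ (-t) * (A * B + s) := mul_nonneg (by linarith) (by linarith)
      nlinarith [sq_nonneg (A - B), mul_le_mul hmAB hw2 (sq_nonneg w) (mul_nonneg hA0 hB0)]
  calc m * w = Real.sqrt ((m * w) ^ 2) := by
        rw [Real.sqrt_sq (mul_nonneg hm0 hw0)]
    _ ≤ Real.sqrt (A ^ 2 + B ^ 2 - 2 * s * t) := Real.sqrt_le_sqrt key
end

section
/- Let i : [0, ∞) → [0, ∞) be nondecreasing with lim_{t→∞} i(t)/t = +∞. Define i'(t) := inf_{ρ ∈ (0, 1]} ρ⁻²(i(ρt) + 1). Then: (a) i' is nondecreasing; (b) i'(t) ≤ i(t) + 1 for all t; (c) i'(2t) ≤ 4 i'(t) for all t ≥ 0 (doubling); (d) lim_{t→∞} i'(t)/t = +∞. -/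
open Filter Topology

/-- De La Vallée Poussin integrand with doubling: if `i : [0,∞) → [0,∞)` is nondecreasing with
`i(t)/t → ∞`, then `i'(t) := inf_{ρ∈(0,1]} ρ⁻²(i(ρt)+1)` is nondecreasing, satisfies
`i'(t) ≤ i(t)+1`, doubles as `i'(2t) ≤ 4 i'(t)`, and is still superlinear. -/
theorem de_la_vallee_poussin_doubling (i : ℝ → ℝ)
    (hmono : ∀ s t : ℝ, 0 ≤ s → s ≤ t → i s ≤ i t)
    (hnonneg : ∀ t : ℝ, 0 ≤ t → 0 ≤ i t)
    (hsup : Tendsto (fun t : ℝ => i t / t) atTop atTop) :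
    let i' : ℝ → ℝ := fun t =>
      sInf {x : ℝ | ∃ ρ : ℝ, 0 < ρ ∧ ρ ≤ 1 ∧ x = (ρ ^ 2)⁻¹ * (i (ρ * t) + 1)}
    (∀ s t : ℝ, 0 ≤ s → s ≤ t → i' s ≤ i' t) ∧
    (∀ t : ℝ, 0 ≤ t → i' t ≤ i t + 1) ∧
    (∀ t : ℝ, 0 ≤ t → i' (2 * t) ≤ 4 * i' t) ∧
    Tendsto (fun t : ℝ => i' t / t) atTop atTop := by
  intro i'
  have hbdd : ∀ t : ℝ, 0 ≤ t →
      BddBelow {x : ℝ | ∃ ρ : ℝ, 0 < ρ ∧ ρ ≤ 1 ∧ x = (ρ ^ 2)⁻¹ * (i (ρ * t) + 1)} := by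
    intro t ht
    refine ⟨0, ?_⟩
    rintro x ⟨ρ, hρ0, hρ1, rfl⟩
    have h1 : 0 ≤ i (ρ * t) := hnonneg _ (by positivity)
    positivity
  have hne : ∀ t : ℝ,
      ({x : ℝ | ∃ ρ : ℝ, 0 < ρ ∧ ρ ≤ 1 ∧ x = (ρ ^ 2)⁻¹ * (i (ρ * t) + 1)}).Nonempty :=
    fun t => ⟨i t + 1, 1, one_pos, le_refl 1, by norm_num⟩
  refine ⟨?_, ?_, ?_, ?_⟩
  · intro s t hs hst
    refine le_csInf (hne t) ?_
    rintro x ⟨ρ, hρ0, hρ1, rfl⟩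
    refine le_trans (csInf_le (hbdd s hs) ⟨ρ, hρ0, hρ1, rfl⟩) ?_
    have h1 : i (ρ * s) ≤ i (ρ * t) := hmono _ _ (by positivity) (by nlinarith)
    have h2 : (0:ℝ) ≤ (ρ ^ 2)⁻¹ := by positivity
    nlinarith
  · intro t ht
    exact csInf_le (hbdd t ht) ⟨1, one_pos, le_refl 1, by norm_num⟩
  · intro t ht
    have key : i' (2 * t) / 4 ≤ i' t := by
      refine le_csInf (hne t) ?_
      rintro x ⟨ρ, hρ0, hρ1, rfl⟩
      have hmem : 4 * ((ρ ^ 2)⁻¹ * (i (ρ * t) + 1)) ∈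
          {x : ℝ | ∃ σ : ℝ, 0 < σ ∧ σ ≤ 1 ∧ x = (σ ^ 2)⁻¹ * (i (σ * (2 * t)) + 1)} := by
        refine ⟨ρ / 2, by positivity, by linarith, ?_⟩
        have : ρ / 2 * (2 * t) = ρ * t := by ring
        rw [this, show (ρ / 2) ^ 2 = ρ ^ 2 / 4 by ring, inv_div]
        ring
      have := csInf_le (hbdd (2 * t) (by positivity)) hmem
      linarith
    linarith
  · rw [tendsto_atTop]
    intro M
    set M' := max M 1 with hM'
    have hM'pos : (0:ℝ) < M' := lt_of_lt_of_le one_pos (le_max_right _ _)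
    obtain ⟨T, hT⟩ := eventually_atTop.1 (tendsto_atTop.1 hsup M')
    set T' := max T 1 with hT'
    have hT'pos : (0:ℝ) < T' := lt_of_lt_of_le one_pos (le_max_right _ _)
    have hTle : ∀ s : ℝ, T' ≤ s → M' ≤ i s / s := fun s hs =>
      hT s (le_trans (le_max_left _ _) hs)
    filter_upwards [eventually_ge_atTop (1:ℝ), eventually_ge_atTop (M' * T' ^ 2)]
      with t ht1 ht2
    have ht' : (0:ℝ) < t := lt_of_lt_of_le one_pos ht1
    have key : M' * t ≤ i' t := by
      refine le_csInf (hne t) ?_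
      rintro x ⟨ρ, hρ0, hρ1, rfl⟩
      have hρne : ρ ≠ 0 := ne_of_gt hρ0
      have hu : ρ * ρ⁻¹ = 1 := mul_inv_cancel₀ hρne
      have hinvpos : (0:ℝ) < ρ⁻¹ := inv_pos.2 hρ0
      have hu1 : (1:ℝ) ≤ ρ⁻¹ := by nlinarith
      have hinv : (ρ ^ 2)⁻¹ = ρ⁻¹ ^ 2 := by rw [inv_pow]
      rw [hinv]
      rcases le_or_gt T' (ρ * t) with hcase | hcase
      · have hρt : 0 < ρ * t := lt_of_lt_of_le hT'pos hcase
        have h1 : M' ≤ i (ρ * t) / (ρ * t) := hTle _ hcase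
        have h2 : M' * (ρ * t) ≤ i (ρ * t) := by
          rw [← le_div_iff₀ hρt]; exact h1
        have e1 : ρ⁻¹ ^ 2 * (M' * (ρ * t)) = M' * t * ρ⁻¹ := by
          have hm : ρ⁻¹ * ρ = 1 := inv_mul_cancel₀ hρne
          calc ρ⁻¹ ^ 2 * (M' * (ρ * t)) = M' * t * ρ⁻¹ * (ρ⁻¹ * ρ) := by ring
            _ = M' * t * ρ⁻¹ := by rw [hm, mul_one]
        have s1 := mul_le_mul_of_nonneg_left h2 (sq_nonneg ρ⁻¹)
        rw [e1] at s1
        have s2 : M' * t ≤ M' * t * ρ⁻¹ :=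
          le_mul_of_one_le_right (by positivity) hu1
        nlinarith [sq_nonneg ρ⁻¹]
      · have h0 : 0 ≤ i (ρ * t) := hnonneg _ (by positivity)
        have h1 : t ≤ ρ⁻¹ * T' := by
          have := mul_le_mul_of_nonneg_left (le_of_lt hcase) (le_of_lt (inv_pos.2 hρ0))
          calc t = ρ⁻¹ * (ρ * t) := by field_simp
            _ ≤ ρ⁻¹ * T' := this
        have h2 : M' * T' ^ 2 ≤ t := ht2
        have s1 := mul_self_le_mul_self ht'.le h1
        have s2 := mul_le_mul_of_nonneg_right h2 ht'.le
        have s3 : M' * t ≤ ρ⁻¹ ^ 2 :=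
          le_of_mul_le_mul_right (by nlinarith) (by positivity : (0:ℝ) < T' ^ 2)
        nlinarith [sq_nonneg ρ⁻¹]
    calc M ≤ M' := le_max_left _ _
      _ ≤ i' t / t := (le_div_iff₀ ht').2 key
end
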